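/- For every function f : ℕ+ → ℕ+, the abelianization of the group 𝒫(f) is trivial; that is, 𝒫(f) is a perfect group. -/

import Mathlib

/-- The relators of the presentation `𝒫(f)`: for each `i ∈ ℕ+`, the word
`a_{f(i)}⁻¹ a_i a_{f(i)} a_i⁻²` in the free group on `ℕ+`. -/
def Prels (f : ℕ+ → ℕ+) : Set (FreeGroup ℕ+) :=
  {r | ∃ i : ℕ+, r =
    (FreeGroup.of (f i))⁻¹ * FreeGroup.of i * FreeGroup.of (f i) * (FreeGroup.of i ^ 2)⁻¹}

/-- The abelianization of `𝒫(f)` is trivial, i.e. `𝒫(f)` is perfect. -/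
theorem stmt_11 (f : ℕ+ → ℕ+)
    (x : Abelianization (PresentedGroup (Prels f))) : x = 1 := by
  set h : FreeGroup ℕ+ →* Abelianization (PresentedGroup (Prels f)) :=
    Abelianization.of.comp (QuotientGroup.mk' (Subgroup.normalClosure (Prels f))) with hh
  have key : ∀ i : ℕ+, h (FreeGroup.of i) = 1 := by
    intro i
    have hmem : ((FreeGroup.of (f i))⁻¹ * FreeGroup.of i * FreeGroup.of (f i) *
        (FreeGroup.of i ^ 2)⁻¹ : FreeGroup ℕ+) ∈ Subgroup.normalClosure (Prels f) :=
      Subgroup.subset_normalClosure ⟨i, rfl⟩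
    have hr : h ((FreeGroup.of (f i))⁻¹ * FreeGroup.of i * FreeGroup.of (f i) *
        (FreeGroup.of i ^ 2)⁻¹) = 1 := by
      have h1 : (QuotientGroup.mk' (Subgroup.normalClosure (Prels f)))
          ((FreeGroup.of (f i))⁻¹ * FreeGroup.of i * FreeGroup.of (f i) *
            (FreeGroup.of i ^ 2)⁻¹) = (1 : PresentedGroup (Prels f)) :=
        (QuotientGroup.eq_one_iff _).2 hmem
      rw [hh]
      exact (congrArg (Abelianization.of (G := PresentedGroup (Prels f))) h1).trans (map_one _)
    rw [map_mul, map_mul, map_mul, map_inv, map_inv, map_pow] at hr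
    set a := h (FreeGroup.of i)
    set b := h (FreeGroup.of (f i))
    have hc : b⁻¹ * a * b = a := by
      rw [mul_comm b⁻¹ a, mul_assoc, inv_mul_cancel, mul_one]
    rw [hc, mul_inv_eq_one] at hr
    have h3 : a * a = a * 1 := by
      rw [mul_one, ← sq]; exact hr.symm
    exact mul_left_cancel h3
  have hone : h = 1 := FreeGroup.ext_hom _ _ (by simpa using key)
  induction x using QuotientGroup.induction_on with
  | H y =>
    induction y using QuotientGroup.induction_on with
    | H w =>
      have : h w = 1 := by rw [hone]; rfl
      exact this
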